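/- arXiv:1504.02887 — 3 statements merged into one kernel-verified Lean document; each statement's English description precedes it below -/
import Mathlib

section
/- For all (u_1,u_2,u_3) with u_3 ∈ (0,1) and u_1,u_2 ∈ [0,1], the partial derivative of the three-dimensional vine copula C with respect to u_3 satisfies ∂C(u_1,u_2,u_3)/∂u_3 = ∫_0^{u_2} ∂₃C_{13;2}( C_{1|2}(u_1|v_2), C_{3|2}(u_3|v_2) ) · c_{23}(v_2,u_3) dv_2. -/
noncomputable section

open Set MeasureTheory Filter Topology

/-- The density of a bivariate copula: the mixed second partial derivative `∂²C/∂s∂t`. -/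
def copDens (C : ℝ × ℝ → ℝ) (s t : ℝ) : ℝ :=
  deriv (fun a => deriv (fun b => C (a, b)) t) s

/-- The conditional distribution function `C_{1|2}(u₁|u₂) = ∂C₁₂(u₁,u₂)/∂u₂`. -/
def cond12 (C12 : ℝ × ℝ → ℝ) (u1 u2 : ℝ) : ℝ :=
  deriv (fun b => C12 (u1, b)) u2

/-- The conditional distribution function `C_{3|2}(u₃|u₂) = ∂C₂₃(u₂,u₃)/∂u₂`. -/
def cond32 (C23 : ℝ × ℝ → ℝ) (u3 u2 : ℝ) : ℝ :=
  deriv (fun a => C23 (a, u3)) u2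

/-- `∂₁C(x,y) = ∂C(x,y)/∂x`. -/
def pdFst (C : ℝ × ℝ → ℝ) (x y : ℝ) : ℝ := deriv (fun a => C (a, y)) x

/-- `∂₃C(x,y) = ∂C(x,y)/∂y` (derivative in the second argument). -/
def pdSnd (C : ℝ × ℝ → ℝ) (x y : ℝ) : ℝ := deriv (fun b => C (x, b)) y

/-- The three-dimensional vine copula built from the pair copulas `C₁₂, C₂₃, C₁₃;₂`:
`C(u₁,u₂,u₃) = ∫₀^{u₁}∫₀^{u₂}∫₀^{u₃} c₁₂(v₁,v₂) c₂₃(v₂,v₃)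
  c₁₃;₂(C_{1|2}(v₁|v₂), C_{3|2}(v₃|v₂)) dv₃ dv₂ dv₁`. -/
def vine (C12 C23 C132 : ℝ × ℝ → ℝ) (u1 u2 u3 : ℝ) : ℝ :=
  ∫ v1 in (0:ℝ)..u1, ∫ v2 in (0:ℝ)..u2, ∫ v3 in (0:ℝ)..u3,
    copDens C12 v1 v2 * copDens C23 v2 v3 *
      copDens C132 (cond12 C12 v1 v2) (cond32 C23 v3 v2)

/- ### Auxiliary lemmas -/

lemma hasDerivAt_sndVar {C : ℝ × ℝ → ℝ} {a b : ℝ} (h : DifferentiableAt ℝ C (a, b)) :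
    HasDerivAt (fun t => C (a, t)) (fderiv ℝ C (a, b) (0, 1)) b := by
  have h1 : HasDerivAt (fun t : ℝ => ((a, t) : ℝ × ℝ)) ((0:ℝ), (1:ℝ)) b :=
    HasDerivAt.prodMk (hasDerivAt_const _ _) (hasDerivAt_id _)
  exact h.hasFDerivAt.comp_hasDerivAt b h1

lemma hasDerivAt_fstVar {C : ℝ × ℝ → ℝ} {a b : ℝ} (h : DifferentiableAt ℝ C (a, b)) :
    HasDerivAt (fun t => C (t, b)) (fderiv ℝ C (a, b) (1, 0)) a := by
  have h1 : HasDerivAt (fun t : ℝ => ((t, b) : ℝ × ℝ)) ((1:ℝ), (0:ℝ)) a :=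
    HasDerivAt.prodMk (hasDerivAt_id _) (hasDerivAt_const _ _)
  exact h.hasFDerivAt.comp_hasDerivAt a h1

section C2

variable {C : ℝ × ℝ → ℝ} {U : Set (ℝ × ℝ)} (hU : IsOpen U) (h : ContDiffOn ℝ 2 C U)
include hU h

lemma diffAtOfC2 {p : ℝ × ℝ} (hp : p ∈ U) : DifferentiableAt ℝ C p :=
  (h.differentiableOn (by norm_num)).differentiableAt (hU.mem_nhds hp)

lemma contDiffOn_dsnd : ContDiffOn ℝ 1 (fun p : ℝ × ℝ => fderiv ℝ C p (0, 1)) U := by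
  have h' : ContDiffOn ℝ 1 (fun p => fderiv ℝ C p) U := h.fderiv_of_isOpen hU (by norm_num)
  exact (ContinuousLinearMap.apply ℝ ℝ ((0:ℝ), (1:ℝ))).contDiff.comp_contDiffOn h'

lemma pdSnd_eq {p : ℝ × ℝ} (hp : p ∈ U) : pdSnd C p.1 p.2 = fderiv ℝ C p (0, 1) := by
  have := hasDerivAt_sndVar (diffAtOfC2 hU h (p := (p.1, p.2)) (by simpa using hp))
  simpa [pdSnd] using this.deriv

lemma cond32_eq' {p : ℝ × ℝ} (hp : p ∈ U) : cond32 C p.2 p.1 = fderiv ℝ C p (1, 0) := by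
  have := hasDerivAt_fstVar (diffAtOfC2 hU h (p := (p.1, p.2)) (by simpa using hp))
  simpa [cond32] using this.deriv

lemma eventually_pdSnd_eq {a b : ℝ} (hp : (a, b) ∈ U) :
    (fun t => pdSnd C t b) =ᶠ[𝓝 a] (fun t => fderiv ℝ C (t, b) (0, 1)) := by
  have hopen : {t : ℝ | (t, b) ∈ U} ∈ 𝓝 a :=
    (hU.preimage (by fun_prop : Continuous fun t : ℝ => ((t, b) : ℝ × ℝ))).mem_nhds hp
  filter_upwards [hopen] with t ht
  exact pdSnd_eq hU h (p := (t, b)) ht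

lemma copDens_eq {p : ℝ × ℝ} (hp : p ∈ U) :
    copDens C p.1 p.2 = fderiv ℝ (fun q : ℝ × ℝ => fderiv ℝ C q (0, 1)) p (1, 0) := by
  obtain ⟨a, b⟩ := p
  have hev := eventually_pdSnd_eq hU h hp
  have hd : DifferentiableAt ℝ (fun q : ℝ × ℝ => fderiv ℝ C q (0, 1)) (a, b) :=
    ((contDiffOn_dsnd hU h).differentiableOn one_ne_zero).differentiableAt (hU.mem_nhds hp)
  have h2 : HasDerivAt (fun t => fderiv ℝ C (t, b) (0, 1))
      (fderiv ℝ (fun q : ℝ × ℝ => fderiv ℝ C q (0, 1)) (a, b) (1, 0)) a := hasDerivAt_fstVar hd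
  have : copDens C a b = deriv (fun t => pdSnd C t b) a := rfl
  rw [this, hev.deriv_eq, h2.deriv]

lemma hasDerivAt_pdSnd_fst {a b : ℝ} (hp : (a, b) ∈ U) :
    HasDerivAt (fun t => pdSnd C t b) (copDens C a b) a := by
  have hev := eventually_pdSnd_eq hU h hp
  have hd : DifferentiableAt ℝ (fun q : ℝ × ℝ => fderiv ℝ C q (0, 1)) (a, b) :=
    ((contDiffOn_dsnd hU h).differentiableOn one_ne_zero).differentiableAt (hU.mem_nhds hp)
  have h2 : HasDerivAt (fun t => fderiv ℝ C (t, b) (0, 1))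
      (fderiv ℝ (fun q : ℝ × ℝ => fderiv ℝ C q (0, 1)) (a, b) (1, 0)) a := hasDerivAt_fstVar hd
  rw [copDens_eq hU h (p := (a, b)) hp]
  exact h2.congr_of_eventuallyEq hev

lemma continuousOn_copDens : ContinuousOn (fun p : ℝ × ℝ => copDens C p.1 p.2) U := by
  have h1 : ContinuousOn (fun p : ℝ × ℝ => fderiv ℝ (fun q : ℝ × ℝ => fderiv ℝ C q (0, 1)) p) U :=
    (contDiffOn_dsnd hU h).continuousOn_fderiv_of_isOpen hU le_rfl
  have h2 : ContinuousOn
      (fun p : ℝ × ℝ => fderiv ℝ (fun q : ℝ × ℝ => fderiv ℝ C q (0, 1)) p (1, 0)) U :=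
    (ContinuousLinearMap.apply ℝ ℝ ((1:ℝ), (0:ℝ))).continuous.comp_continuousOn h1
  exact h2.congr fun p hp => copDens_eq hU h hp

lemma continuousOn_pdSnd : ContinuousOn (fun p : ℝ × ℝ => pdSnd C p.1 p.2) U :=
  ((contDiffOn_dsnd hU h).continuousOn).congr fun p hp => pdSnd_eq hU h hp

lemma continuousOn_cond32 : ContinuousOn (fun p : ℝ × ℝ => cond32 C p.2 p.1) U := by
  have h' : ContDiffOn ℝ 1 (fun p : ℝ × ℝ => fderiv ℝ C p (1, 0)) U := by
    have h'' : ContDiffOn ℝ 1 (fun p => fderiv ℝ C p) U := h.fderiv_of_isOpen hU (by norm_num)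
    exact (ContinuousLinearMap.apply ℝ ℝ ((1:ℝ), (0:ℝ))).contDiff.comp_contDiffOn h''
  exact h'.continuousOn.congr fun p hp => cond32_eq' hU h hp

end C2

lemma deriv_eq_zero_of_eqOn_zero {f : ℝ → ℝ} {v : ℝ} (hf : DifferentiableAt ℝ f v)
    (h0 : ∀ t ∈ Icc (0:ℝ) 1, f t = 0) (hv : v ∈ Icc (0:ℝ) 1) : deriv f v = 0 := by
  have h1 : HasDerivWithinAt f (deriv f v) (Icc (0:ℝ) 1) v := hf.hasDerivAt.hasDerivWithinAt
  have h2 : HasDerivWithinAt (fun _ : ℝ => (0:ℝ)) 0 (Icc (0:ℝ) 1) v :=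
    hasDerivWithinAt_const _ _ _
  have h3 : HasDerivWithinAt f 0 (Icc (0:ℝ) 1) v := h2.congr (fun t ht => h0 t ht) (h0 v hv)
  have hu : UniqueDiffWithinAt ℝ (Icc (0:ℝ) 1) v := uniqueDiffOn_Icc one_pos v hv
  rw [← h1.derivWithin hu, h3.derivWithin hu]

lemma swap_helper (f : ℝ → ℝ → ℝ) (hf : Continuous (Function.uncurry f)) {b d : ℝ}
    (hb : 0 ≤ b) (hd : 0 ≤ d) :
    ∫ x in (0:ℝ)..b, ∫ y in (0:ℝ)..d, f x y = ∫ y in (0:ℝ)..d, ∫ x in (0:ℝ)..b, f x y := by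
  simp_rw [intervalIntegral.integral_of_le hb, intervalIntegral.integral_of_le hd]
  apply MeasureTheory.integral_integral_swap
  rw [Measure.prod_restrict]
  exact (hf.locallyIntegrable.integrableOn_isCompact (isCompact_Icc.prod isCompact_Icc)).mono_set
    (Set.prod_mono Ioc_subset_Icc_self Ioc_subset_Icc_self)

/-- ∂C(u₁,u₂,u₃)/∂u₃ = ∫₀^{u₂} ∂₃C₁₃;₂(C_{1|2}(u₁|v₂), C_{3|2}(u₃|v₂)) ⬝ c₂₃(v₂,u₃) dv₂. -/
theorem vine_partial_u3
    (C12 C23 C132 : ℝ × ℝ → ℝ)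
    (U : Set (ℝ × ℝ)) (hU : IsOpen U)
    (hUsub : Set.Icc ((0 : ℝ), (0 : ℝ)) (1, 1) ⊆ U)
    (h12 : ContDiffOn ℝ 2 C12 U) (h23 : ContDiffOn ℝ 2 C23 U)
    (h132 : ContDiffOn ℝ 2 C132 U)
    (hb12 : ∀ t ∈ Set.Icc (0:ℝ) 1, C12 (0, t) = 0 ∧ C12 (t, 0) = 0)
    (hb23 : ∀ t ∈ Set.Icc (0:ℝ) 1, C23 (0, t) = 0 ∧ C23 (t, 0) = 0)
    (hb132 : ∀ t ∈ Set.Icc (0:ℝ) 1, C132 (0, t) = 0 ∧ C132 (t, 0) = 0)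
    (hr12 : ∀ u1 ∈ Set.Icc (0:ℝ) 1, ∀ u2 ∈ Set.Icc (0:ℝ) 1,
      cond12 C12 u1 u2 ∈ Set.Icc (0:ℝ) 1)
    (hr32 : ∀ u3 ∈ Set.Icc (0:ℝ) 1, ∀ u2 ∈ Set.Icc (0:ℝ) 1,
      cond32 C23 u3 u2 ∈ Set.Icc (0:ℝ) 1)
    (u1 u2 u3 : ℝ) (hu1 : u1 ∈ Set.Icc (0:ℝ) 1) (hu2 : u2 ∈ Set.Icc (0:ℝ) 1)
    (hu3 : u3 ∈ Set.Ioo (0:ℝ) 1) :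
    deriv (fun c => vine C12 C23 C132 u1 u2 c) u3 =
      ∫ v2 in (0:ℝ)..u2,
        pdSnd C132 (cond12 C12 u1 v2) (cond32 C23 u3 v2) * copDens C23 v2 u3 := by
  have memU : ∀ {x y : ℝ}, x ∈ Icc (0:ℝ) 1 → y ∈ Icc (0:ℝ) 1 → (x, y) ∈ U := by
    intro x y hx hy
    exact hUsub (Set.mem_Icc.mpr ⟨Prod.mk_le_mk.mpr ⟨hx.1, hy.1⟩, Prod.mk_le_mk.mpr ⟨hx.2, hy.2⟩⟩)
  have hu3m : u3 ∈ Icc (0:ℝ) 1 := ⟨hu3.1.le, hu3.2.le⟩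
  -- continuity facts
  have hc12 : ContinuousOn (fun p : ℝ × ℝ => copDens C12 p.1 p.2) U := continuousOn_copDens hU h12
  have hc23 : ContinuousOn (fun p : ℝ × ℝ => copDens C23 p.1 p.2) U := continuousOn_copDens hU h23
  have hc132 : ContinuousOn (fun p : ℝ × ℝ => copDens C132 p.1 p.2) U :=
    continuousOn_copDens hU h132
  have hcd12 : ContinuousOn (fun p : ℝ × ℝ => cond12 C12 p.1 p.2) U := continuousOn_pdSnd hU h12
  have hcd32 : ContinuousOn (fun p : ℝ × ℝ => cond32 C23 p.2 p.1) U := continuousOn_cond32 hU h23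
  -- the integrand
  set g : ℝ × ℝ × ℝ → ℝ := fun p =>
    copDens C12 p.1 p.2.1 * copDens C23 p.2.1 p.2.2 *
      copDens C132 (cond12 C12 p.1 p.2.1) (cond32 C23 p.2.2 p.2.1) with hg_def
  set K : Set (ℝ × ℝ × ℝ) := Icc 0 1 ×ˢ (Icc 0 1 ×ˢ Icc 0 1) with hK_def
  set W : Set (ℝ × ℝ × ℝ) :=
    ((fun p : ℝ × ℝ × ℝ => (p.1, p.2.1)) ⁻¹' U) ∩ ((fun p : ℝ × ℝ × ℝ => (p.2.1, p.2.2)) ⁻¹' U)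
    with hW_def
  have hWopen : IsOpen W :=
    (hU.preimage (by fun_prop)).inter (hU.preimage (by fun_prop))
  have hΦ : ContinuousOn
      (fun p : ℝ × ℝ × ℝ => (cond12 C12 p.1 p.2.1, cond32 C23 p.2.2 p.2.1)) W := by
    apply ContinuousOn.prodMk
    · exact hcd12.comp (by fun_prop : Continuous fun p : ℝ × ℝ × ℝ => (p.1, p.2.1)).continuousOn
        (fun p hp => hp.1)
    · exact hcd32.comp
        (by fun_prop : Continuous fun p : ℝ × ℝ × ℝ => (p.2.1, p.2.2)).continuousOn
        (fun p hp => hp.2)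
  set O : Set (ℝ × ℝ × ℝ) := W ∩
    ((fun p : ℝ × ℝ × ℝ => (cond12 C12 p.1 p.2.1, cond32 C23 p.2.2 p.2.1)) ⁻¹' U) with hO_def
  have hOopen : IsOpen O := hΦ.isOpen_inter_preimage hWopen hU
  have hKO : K ⊆ O := by
    rintro ⟨p1, p2, p3⟩ ⟨hp1, hp2, hp3⟩
    exact ⟨⟨memU hp1 hp2, memU hp2 hp3⟩,
      memU (hr12 _ hp1 _ hp2) (hr32 _ hp3 _ hp2)⟩
  have hgO : ContinuousOn g O := by
    apply ContinuousOn.mul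
    apply ContinuousOn.mul
    · exact hc12.comp (by fun_prop : Continuous fun p : ℝ × ℝ × ℝ => (p.1, p.2.1)).continuousOn
        (fun p hp => hp.1.1)
    · exact hc23.comp (by fun_prop : Continuous fun p : ℝ × ℝ × ℝ => (p.2.1, p.2.2)).continuousOn
        (fun p hp => hp.1.2)
    · exact hc132.comp (hΦ.mono Set.inter_subset_left) (fun p hp => hp.2)
  -- Tietze extension of g from K
  have hKclosed : IsClosed K := isClosed_Icc.prod (isClosed_Icc.prod isClosed_Icc)
  obtain ⟨gt, hgt⟩ := ContinuousMap.exists_restrict_eq (Y := ℝ) hKclosed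
    ⟨K.restrict g, continuousOn_iff_continuous_restrict.mp (hgO.mono hKO)⟩
  have hgtK : ∀ p ∈ K, gt p = g p := by
    intro p hp
    have := DFunLike.congr_fun hgt (⟨p, hp⟩ : K)
    exact this
  have hgtc : Continuous gt := gt.continuous
  -- rewrite the vine on a neighborhood of u3
  have key : ∀ c ∈ Ioo (0:ℝ) 1, vine C12 C23 C132 u1 u2 c
      = ∫ v3 in (0:ℝ)..c, ∫ v1 in (0:ℝ)..u1, ∫ v2 in (0:ℝ)..u2, gt (v1, v2, v3) := by
    intro c hc
    have step1 : vine C12 C23 C132 u1 u2 c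
        = ∫ v1 in (0:ℝ)..u1, ∫ v2 in (0:ℝ)..u2, ∫ v3 in (0:ℝ)..c, gt (v1, v2, v3) := by
      unfold vine
      apply intervalIntegral.integral_congr
      intro v1 hv1
      rw [uIcc_of_le hu1.1] at hv1
      apply intervalIntegral.integral_congr
      intro v2 hv2
      rw [uIcc_of_le hu2.1] at hv2
      apply intervalIntegral.integral_congr
      intro v3 hv3
      rw [uIcc_of_le hc.1.le] at hv3
      exact (hgtK (v1, v2, v3) ⟨Icc_subset_Icc_right hu1.2 hv1,
        Icc_subset_Icc_right hu2.2 hv2, Icc_subset_Icc_right hc.2.le hv3⟩).symm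
    rw [step1]
    have step2 : ∀ v1 : ℝ, (∫ v2 in (0:ℝ)..u2, ∫ v3 in (0:ℝ)..c, gt (v1, v2, v3))
        = ∫ v3 in (0:ℝ)..c, ∫ v2 in (0:ℝ)..u2, gt (v1, v2, v3) := fun v1 =>
      swap_helper (fun v2 v3 => gt (v1, v2, v3)) (hgtc.comp (by fun_prop)) hu2.1 hc.1.le
    simp_rw [step2]
    exact swap_helper (fun v1 v3 => ∫ v2 in (0:ℝ)..u2, gt (v1, v2, v3))
      (by
        apply intervalIntegral.continuous_parametric_intervalIntegral_of_continuous'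
          (f := fun (p : ℝ × ℝ) v2 => gt (p.1, v2, p.2))
        exact hgtc.comp (by fun_prop)) hu1.1 hc.1.le
  -- continuity of the inner double integral in the parameter
  have hGt : Continuous (fun v3 => ∫ v1 in (0:ℝ)..u1, ∫ v2 in (0:ℝ)..u2, gt (v1, v2, v3)) := by
    apply intervalIntegral.continuous_parametric_intervalIntegral_of_continuous'
      (f := fun c v1 => ∫ v2 in (0:ℝ)..u2, gt (v1, v2, c))
    apply intervalIntegral.continuous_parametric_intervalIntegral_of_continuous'
      (f := fun (p : ℝ × ℝ) v2 => gt (p.2, v2, p.1))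
    exact hgtc.comp (by fun_prop)
  -- differentiate
  have hderiv : deriv (fun c => vine C12 C23 C132 u1 u2 c) u3
      = ∫ v1 in (0:ℝ)..u1, ∫ v2 in (0:ℝ)..u2, gt (v1, v2, u3) := by
    have hev : (fun c => vine C12 C23 C132 u1 u2 c) =ᶠ[𝓝 u3]
        (fun c => ∫ v3 in (0:ℝ)..c,
          ∫ v1 in (0:ℝ)..u1, ∫ v2 in (0:ℝ)..u2, gt (v1, v2, v3)) := by
      filter_upwards [isOpen_Ioo.mem_nhds hu3] with c hc using key c hc
    rw [hev.deriv_eq]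
    exact (intervalIntegral.integral_hasDerivAt_right (hGt.intervalIntegrable _ _)
      hGt.aestronglyMeasurable.stronglyMeasurableAtFilter hGt.continuousAt).deriv
  rw [hderiv]
  rw [swap_helper (fun v1 v2 => gt (v1, v2, u3)) (hgtc.comp (by fun_prop)) hu1.1 hu2.1]
  -- conclude by FTC in the innermost variable
  apply intervalIntegral.integral_congr
  intro v2 hv2
  rw [uIcc_of_le hu2.1] at hv2
  have hv2' : v2 ∈ Icc (0:ℝ) 1 := Icc_subset_Icc_right hu2.2 hv2
  have y0mem : cond32 C23 u3 v2 ∈ Icc (0:ℝ) 1 := hr32 u3 hu3m v2 hv2'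
  show (∫ v1 in (0:ℝ)..u1, gt (v1, v2, u3))
      = pdSnd C132 (cond12 C12 u1 v2) (cond32 C23 u3 v2) * copDens C23 v2 u3
  have hback : (∫ v1 in (0:ℝ)..u1, gt (v1, v2, u3))
      = ∫ v1 in (0:ℝ)..u1, copDens C23 v2 u3 *
          (copDens C132 (cond12 C12 v1 v2) (cond32 C23 u3 v2) * copDens C12 v1 v2) := by
    apply intervalIntegral.integral_congr
    intro v1 hv1
    rw [uIcc_of_le hu1.1] at hv1
    beta_reduce
    rw [hgtK (v1, v2, u3) ⟨Icc_subset_Icc_right hu1.2 hv1, hv2', hu3m⟩]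
    simp only [hg_def]
    ring
  rw [hback, intervalIntegral.integral_const_mul]
  have hder : ∀ t ∈ uIcc (0:ℝ) u1,
      HasDerivAt (fun s => pdSnd C132 (cond12 C12 s v2) (cond32 C23 u3 v2))
        (copDens C132 (cond12 C12 t v2) (cond32 C23 u3 v2) * copDens C12 t v2) t := by
    intro t ht
    rw [uIcc_of_le hu1.1] at ht
    have ht' : t ∈ Icc (0:ℝ) 1 := Icc_subset_Icc_right hu1.2 ht
    have h1 : HasDerivAt (fun s => cond12 C12 s v2) (copDens C12 t v2) t :=
      hasDerivAt_pdSnd_fst hU h12 (memU ht' hv2')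
    have x0mem : cond12 C12 t v2 ∈ Icc (0:ℝ) 1 := hr12 t ht' v2 hv2'
    have h2 : HasDerivAt (fun x => pdSnd C132 x (cond32 C23 u3 v2))
        (copDens C132 (cond12 C12 t v2) (cond32 C23 u3 v2)) (cond12 C12 t v2) :=
      hasDerivAt_pdSnd_fst hU h132 (memU x0mem y0mem)
    exact h2.comp t h1
  have hint : IntervalIntegrable
      (fun t => copDens C132 (cond12 C12 t v2) (cond32 C23 u3 v2) * copDens C12 t v2)
      volume 0 u1 := by
    apply ContinuousOn.intervalIntegrable
    rw [uIcc_of_le hu1.1]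
    have hmap : ∀ t ∈ Icc (0:ℝ) u1, t ∈ Icc (0:ℝ) 1 := fun t ht =>
      Icc_subset_Icc_right hu1.2 ht
    apply ContinuousOn.mul
    · apply hc132.comp (s := Icc (0:ℝ) u1)
        (f := fun t => (cond12 C12 t v2, cond32 C23 u3 v2))
      · apply ContinuousOn.prodMk _ continuousOn_const
        exact hcd12.comp (by fun_prop : Continuous fun t : ℝ => ((t, v2) : ℝ × ℝ)).continuousOn
          (fun t ht => memU (hmap t ht) hv2')
      · exact fun t ht => memU (hr12 t (hmap t ht) v2 hv2') y0mem
    · exact hc12.comp (by fun_prop : Continuous fun t : ℝ => ((t, v2) : ℝ × ℝ)).continuousOn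
        (fun t ht => memU (hmap t ht) hv2')
  have hFTC := intervalIntegral.integral_eq_sub_of_hasDerivAt hder hint
  rw [hFTC]
  have hz : cond12 C12 0 v2 = 0 := by
    have hd : DifferentiableAt ℝ (fun b => C12 (0, b)) v2 :=
      (hasDerivAt_sndVar (diffAtOfC2 hU h12 (memU (left_mem_Icc.mpr zero_le_one) hv2')
        )).differentiableAt
    exact deriv_eq_zero_of_eqOn_zero hd (fun t ht => (hb12 t ht).1) hv2'
  have hz2 : pdSnd C132 0 (cond32 C23 u3 v2) = 0 := by
    have hd : DifferentiableAt ℝ (fun b => C132 (0, b)) (cond32 C23 u3 v2) :=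
      (hasDerivAt_sndVar (diffAtOfC2 hU h132
        (memU (left_mem_Icc.mpr zero_le_one) y0mem))).differentiableAt
    exact deriv_eq_zero_of_eqOn_zero hd (fun t ht => (hb132 t ht).1) y0mem
  rw [hz, hz2, sub_zero, mul_comm]

end
end

section
/- For all (u_1,u_2,u_3) with u_1,u_2 ∈ (0,1) and u_3 ∈ [0,1], the mixed second partial derivative of the three-dimensional vine copula C with respect to u_1 and u_2 satisfies ∂²C(u_1,u_2,u_3)/∂u_1∂u_2 = ∂₁C_{13;2}( C_{1|2}(u_1|u_2), C_{3|2}(u_3|u_2) ) · c_{12}(u_1,u_2). -/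
noncomputable section

open Set MeasureTheory Metric Filter Topology

set_option maxHeartbeats 1000000

private lemma mem_Icc_prod {p a b : ℝ × ℝ} :
    p ∈ Set.Icc a b ↔ p.1 ∈ Set.Icc a.1 b.1 ∧ p.2 ∈ Set.Icc a.2 b.2 := by
  rw [Set.Icc_prod_eq]; exact Set.mem_prod

private lemma hasDerivAt_slice_fst {g : ℝ × ℝ → ℝ} {φ : ℝ × ℝ →L[ℝ] ℝ} {s t : ℝ}
    (hg : HasFDerivAt g φ (s, t)) : HasDerivAt (fun a => g (a, t)) (φ (1, 0)) s :=
  hg.comp_hasDerivAt s (HasDerivAt.prodMk (hasDerivAt_id s) (hasDerivAt_const s t))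

private lemma hasDerivAt_slice_snd {g : ℝ × ℝ → ℝ} {φ : ℝ × ℝ →L[ℝ] ℝ} {s t : ℝ}
    (hg : HasFDerivAt g φ (s, t)) : HasDerivAt (fun b => g (s, b)) (φ (0, 1)) t :=
  hg.comp_hasDerivAt t (HasDerivAt.prodMk (hasDerivAt_const t s) (hasDerivAt_id t))

private lemma diffAt2 {f : ℝ × ℝ → ℝ} {U : Set (ℝ × ℝ)} (hU : IsOpen U)
    (hf : ContDiffOn ℝ 2 f U) {p : ℝ × ℝ} (hp : p ∈ U) : DifferentiableAt ℝ f p :=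
  (hf.differentiableOn (by norm_num)).differentiableAt (hU.mem_nhds hp)

private lemma hasFDerivAt_pd {f : ℝ × ℝ → ℝ} {U : Set (ℝ × ℝ)} (hU : IsOpen U)
    (hf : ContDiffOn ℝ 2 f U) {p : ℝ × ℝ} (hp : p ∈ U) (v : ℝ × ℝ) :
    HasFDerivAt (fun q => fderiv ℝ f q v)
      ((ContinuousLinearMap.apply ℝ ℝ v).comp (fderiv ℝ (fderiv ℝ f) p)) p := by
  have h1 : ContDiffOn ℝ 1 (fderiv ℝ f) U := hf.fderiv_of_isOpen hU (by norm_num)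
  have h2 : DifferentiableAt ℝ (fderiv ℝ f) p :=
    (h1.differentiableOn one_ne_zero).differentiableAt (hU.mem_nhds hp)
  exact (ContinuousLinearMap.apply ℝ ℝ v).hasFDerivAt.comp p h2.hasFDerivAt

private lemma sym2 {f : ℝ × ℝ → ℝ} {U : Set (ℝ × ℝ)} (hU : IsOpen U)
    (hf : ContDiffOn ℝ 2 f U) {p : ℝ × ℝ} (hp : p ∈ U) (v w : ℝ × ℝ) :
    fderiv ℝ (fderiv ℝ f) p v w = fderiv ℝ (fderiv ℝ f) p w v := by
  have hev : ∀ᶠ y in 𝓝 p, HasFDerivAt f (fderiv ℝ f y) y :=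
    eventually_of_mem (hU.mem_nhds hp) fun y hy => (diffAt2 hU hf hy).hasFDerivAt
  have h1 : ContDiffOn ℝ 1 (fderiv ℝ f) U := hf.fderiv_of_isOpen hU (by norm_num)
  have h2 : HasFDerivAt (fderiv ℝ f) (fderiv ℝ (fderiv ℝ f) p) p :=
    ((h1.differentiableOn one_ne_zero).differentiableAt (hU.mem_nhds hp)).hasFDerivAt
  exact second_derivative_symmetric_of_eventually hev h2 v w

private lemma copDens_eq2 {f : ℝ × ℝ → ℝ} {U : Set (ℝ × ℝ)} (hU : IsOpen U)
    (hf : ContDiffOn ℝ 2 f U) {s t : ℝ} (hp : (s, t) ∈ U) :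
    copDens f s t = fderiv ℝ (fderiv ℝ f) (s, t) (1, 0) (0, 1) := by
  have hO : IsOpen {a : ℝ | (a, t) ∈ U} :=
    hU.preimage (continuous_id.prodMk continuous_const)
  have hev : (fun a => deriv (fun b => f (a, b)) t) =ᶠ[𝓝 s]
      (fun a => fderiv ℝ f (a, t) (0, 1)) :=
    eventually_of_mem (hO.mem_nhds hp) fun a ha =>
      (hasDerivAt_slice_snd (diffAt2 hU hf ha).hasFDerivAt).deriv
  have hD : HasDerivAt (fun a => fderiv ℝ f (a, t) (0, 1))
      (fderiv ℝ (fderiv ℝ f) (s, t) (1, 0) (0, 1)) s :=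
    hasDerivAt_slice_fst (hasFDerivAt_pd hU hf hp ((0 : ℝ), (1 : ℝ)))
  rw [copDens, hev.deriv_eq, hD.deriv]

private lemma contOn_D2' {f : ℝ × ℝ → ℝ} {U : Set (ℝ × ℝ)} (hU : IsOpen U)
    (hf : ContDiffOn ℝ 2 f U) :
    ContinuousOn (fun p => fderiv ℝ (fderiv ℝ f) p ((1:ℝ), (0:ℝ)) ((0:ℝ), (1:ℝ))) U := by
  have h1 : ContDiffOn ℝ 1 (fderiv ℝ f) U := hf.fderiv_of_isOpen hU (by norm_num)
  have h2 : ContinuousOn (fderiv ℝ (fderiv ℝ f)) U :=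
    h1.continuousOn_fderiv_of_isOpen hU le_rfl
  exact (h2.clm_apply continuousOn_const).clm_apply continuousOn_const

private lemma contOn_pd' {f : ℝ × ℝ → ℝ} {U : Set (ℝ × ℝ)} (hU : IsOpen U)
    (hf : ContDiffOn ℝ 2 f U) (v : ℝ × ℝ) :
    ContinuousOn (fun p => fderiv ℝ f p v) U :=
  (hf.continuousOn_fderiv_of_isOpen hU (by norm_num)).clm_apply continuousOn_const

/-- auxiliary: the map `(v₁,v₂,v₃) ↦ (C_{1|2}(v₁|v₂), C_{3|2}(v₃|v₂))` (in `fderiv` form). -/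
private def Psif (C12 C23 : ℝ × ℝ → ℝ) (q : (ℝ × ℝ) × ℝ) : ℝ × ℝ :=
  (fderiv ℝ C12 q.1 (0, 1), fderiv ℝ C23 (q.1.2, q.2) (1, 0))

/-- auxiliary: the integrand of the vine copula, in smooth (`fderiv`) form. -/
private def Gfun (C12 C23 C132 : ℝ × ℝ → ℝ) (q : (ℝ × ℝ) × ℝ) : ℝ :=
  fderiv ℝ (fderiv ℝ C12) q.1 (1, 0) (0, 1) *
    (fderiv ℝ (fderiv ℝ C23) (q.1.2, q.2) (1, 0) (0, 1) *
      fderiv ℝ (fderiv ℝ C132) (Psif C12 C23 q) (1, 0) (0, 1))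

/-- auxiliary: inner integral over the third variable. -/
private def hfun (C12 C23 C132 : ℝ × ℝ → ℝ) (u3 v1 v2 : ℝ) : ℝ :=
  ∫ v3 in (0:ℝ)..u3, Gfun C12 C23 C132 ((v1, v2), v3)

/-- ∂²C(u₁,u₂,u₃)/∂u₁∂u₂ = ∂₁C₁₃;₂(C_{1|2}(u₁|u₂), C_{3|2}(u₃|u₂)) ⬝ c₁₂(u₁,u₂). -/
theorem vine_partial_u1_u2
    (C12 C23 C132 : ℝ × ℝ → ℝ)
    (U : Set (ℝ × ℝ)) (hU : IsOpen U)
    (hUsub : Set.Icc ((0 : ℝ), (0 : ℝ)) (1, 1) ⊆ U)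
    (h12 : ContDiffOn ℝ 2 C12 U) (h23 : ContDiffOn ℝ 2 C23 U)
    (h132 : ContDiffOn ℝ 2 C132 U)
    (hb12 : ∀ t ∈ Set.Icc (0:ℝ) 1, C12 (0, t) = 0 ∧ C12 (t, 0) = 0)
    (hb23 : ∀ t ∈ Set.Icc (0:ℝ) 1, C23 (0, t) = 0 ∧ C23 (t, 0) = 0)
    (hb132 : ∀ t ∈ Set.Icc (0:ℝ) 1, C132 (0, t) = 0 ∧ C132 (t, 0) = 0)
    (hr12 : ∀ u1 ∈ Set.Icc (0:ℝ) 1, ∀ u2 ∈ Set.Icc (0:ℝ) 1,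
      cond12 C12 u1 u2 ∈ Set.Icc (0:ℝ) 1)
    (hr32 : ∀ u3 ∈ Set.Icc (0:ℝ) 1, ∀ u2 ∈ Set.Icc (0:ℝ) 1,
      cond32 C23 u3 u2 ∈ Set.Icc (0:ℝ) 1)
    (u1 u2 u3 : ℝ) (hu1 : u1 ∈ Set.Ioo (0:ℝ) 1) (hu2 : u2 ∈ Set.Ioo (0:ℝ) 1)
    (hu3 : u3 ∈ Set.Icc (0:ℝ) 1) :
    deriv (fun a => deriv (fun b => vine C12 C23 C132 a b u3) u2) u1 =
      pdFst C132 (cond12 C12 u1 u2) (cond32 C23 u3 u2) * copDens C12 u1 u2 := by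
  obtain ⟨hu1l, hu1r⟩ := hu1
  obtain ⟨hu2l, hu2r⟩ := hu2
  obtain ⟨hu3l, hu3r⟩ := hu3
  -- identifications of the `deriv`-based quantities with `fderiv`-based ones on `U`
  have hcd12 : ∀ {a b : ℝ}, (a, b) ∈ U → copDens C12 a b
      = fderiv ℝ (fderiv ℝ C12) (a, b) (1, 0) (0, 1) := fun h => copDens_eq2 hU h12 h
  have hcd23 : ∀ {a b : ℝ}, (a, b) ∈ U → copDens C23 a b
      = fderiv ℝ (fderiv ℝ C23) (a, b) (1, 0) (0, 1) := fun h => copDens_eq2 hU h23 h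
  have hcd132 : ∀ {a b : ℝ}, (a, b) ∈ U → copDens C132 a b
      = fderiv ℝ (fderiv ℝ C132) (a, b) (1, 0) (0, 1) := fun h => copDens_eq2 hU h132 h
  have hc12e : ∀ {a b : ℝ}, (a, b) ∈ U → cond12 C12 a b = fderiv ℝ C12 (a, b) (0, 1) :=
    fun h => (hasDerivAt_slice_snd (diffAt2 hU h12 h).hasFDerivAt).deriv
  have hc32e : ∀ {b c : ℝ}, (b, c) ∈ U → cond32 C23 c b = fderiv ℝ C23 (b, c) (1, 0) :=
    fun h => (hasDerivAt_slice_fst (diffAt2 hU h23 h).hasFDerivAt).deriv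
  -- the open set Ω where the integrand is well-behaved
  have hΩ'open : IsOpen {q : (ℝ × ℝ) × ℝ | q.1 ∈ U ∧ (q.1.2, q.2) ∈ U} := by
    have h1 : IsOpen ((fun q : (ℝ × ℝ) × ℝ => q.1) ⁻¹' U) := hU.preimage continuous_fst
    have h2 : IsOpen ((fun q : (ℝ × ℝ) × ℝ => (q.1.2, q.2)) ⁻¹' U) :=
      hU.preimage (continuous_fst.snd.prodMk continuous_snd)
    exact h1.inter h2
  have hΨcont : ContinuousOn (Psif C12 C23) {q : (ℝ × ℝ) × ℝ | q.1 ∈ U ∧ (q.1.2, q.2) ∈ U} :=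
    ((contOn_pd' hU h12 (0, 1)).comp continuousOn_fst fun q hq => hq.1).prodMk
      ((contOn_pd' hU h23 (1, 0)).comp
        (continuous_fst.snd.prodMk continuous_snd).continuousOn fun q hq => hq.2)
  set Ω : Set ((ℝ × ℝ) × ℝ) := {q : (ℝ × ℝ) × ℝ | q.1 ∈ U ∧ (q.1.2, q.2) ∈ U} ∩
      (Psif C12 C23) ⁻¹' U with hΩdef
  have hΩopen : IsOpen Ω := hΨcont.isOpen_inter_preimage hΩ'open hU
  have hΩmem : ∀ {a b c : ℝ}, a ∈ Icc (0:ℝ) 1 → b ∈ Icc (0:ℝ) 1 → c ∈ Icc (0:ℝ) 1 →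
      ((a, b), c) ∈ Ω := by
    intro a b c ha hb hc
    have h1 : (a, b) ∈ U := hUsub (mem_Icc_prod.2 ⟨ha, hb⟩)
    have h2 : (b, c) ∈ U := hUsub (mem_Icc_prod.2 ⟨hb, hc⟩)
    refine ⟨⟨h1, h2⟩, ?_⟩
    have e1 := hr12 a ha b hb
    have e2 := hr32 c hc b hb
    rw [hc12e h1] at e1
    rw [hc32e h2] at e2
    exact hUsub (mem_Icc_prod.2 ⟨e1, e2⟩)
  have hΩsub : (Icc ((0:ℝ), (0:ℝ)) (1, 1)) ×ˢ (Icc (0:ℝ) 1) ⊆ Ω := by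
    rintro ⟨⟨a, b⟩, c⟩ ⟨hab, hc⟩
    obtain ⟨ha, hb⟩ := mem_Icc_prod.1 hab
    exact hΩmem ha hb hc
  -- choose a margin δ around the unit square/cube
  obtain ⟨δ₁, hδ₁, hth1⟩ := isCompact_Icc.exists_thickening_subset_open hU hUsub
  obtain ⟨δ₂, hδ₂, hth2⟩ :=
    (isCompact_Icc.prod isCompact_Icc).exists_thickening_subset_open hΩopen hΩsub
  set δ : ℝ := min δ₁ δ₂ / 2 with hδdef
  have hδpos : 0 < δ := half_pos (lt_min hδ₁ hδ₂)
  have hδlt : δ < min δ₁ δ₂ := half_lt_self (lt_min hδ₁ hδ₂)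
  have hclamp : ∀ x : ℝ, x ∈ Icc (-δ) (1 + δ) →
      min 1 (max 0 x) ∈ Icc (0:ℝ) 1 ∧ dist x (min 1 (max 0 x)) < min δ₁ δ₂ := by
    intro x hx
    obtain ⟨hx1, hx2⟩ := hx
    refine ⟨⟨le_min zero_le_one (le_max_left _ _), min_le_left _ _⟩, ?_⟩
    rw [Real.dist_eq]
    have habs : |x - min 1 (max 0 x)| ≤ δ := by
      rcases le_total x 0 with h | h
      · rw [max_eq_left h, min_eq_right zero_le_one, sub_zero, abs_le]
        constructor <;> linarith
      · rcases le_total x 1 with h' | h'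
        · rw [max_eq_right h, min_eq_right h', sub_self, abs_zero]
          linarith
        · rw [max_eq_right h, min_eq_left h', abs_le]
          constructor <;> linarith
    linarith
  have hJ2 : ∀ {a b : ℝ}, a ∈ Icc (-δ) (1 + δ) → b ∈ Icc (-δ) (1 + δ) → (a, b) ∈ U := by
    intro a b ha hb
    apply hth1
    rw [Metric.mem_thickening_iff]
    refine ⟨(min 1 (max 0 a), min 1 (max 0 b)),
      mem_Icc_prod.2 ⟨(hclamp a ha).1, (hclamp b hb).1⟩, ?_⟩
    rw [Prod.dist_eq]
    exact max_lt (lt_of_lt_of_le (hclamp a ha).2 (min_le_left _ _))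
      (lt_of_lt_of_le (hclamp b hb).2 (min_le_left _ _))
  have hJ3 : ∀ {a b c : ℝ}, a ∈ Icc (-δ) (1 + δ) → b ∈ Icc (-δ) (1 + δ) →
      c ∈ Icc (-δ) (1 + δ) → ((a, b), c) ∈ Ω := by
    intro a b c ha hb hc
    apply hth2
    rw [Metric.mem_thickening_iff]
    refine ⟨((min 1 (max 0 a), min 1 (max 0 b)), min 1 (max 0 c)),
      ⟨mem_Icc_prod.2 ⟨(hclamp a ha).1, (hclamp b hb).1⟩, (hclamp c hc).1⟩, ?_⟩
    rw [Prod.dist_eq, Prod.dist_eq]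
    refine max_lt (max_lt ?_ ?_) ?_
    · exact lt_of_lt_of_le (hclamp a ha).2 (min_le_right _ _)
    · exact lt_of_lt_of_le (hclamp b hb).2 (min_le_right _ _)
    · exact lt_of_lt_of_le (hclamp c hc).2 (min_le_right _ _)
  -- basic subset facts
  have hsub2 : Icc (0:ℝ) 1 ⊆ Ioo (-δ) (1 + δ) :=
    fun x hx => ⟨by linarith [hx.1], by linarith [hx.2]⟩
  have hsub1 : Ioo (0:ℝ) 1 ⊆ Ioo (-δ) (1 + δ) :=
    fun x hx => hsub2 ⟨hx.1.le, hx.2.le⟩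
  have hIoosub : Ioo (-δ) (1 + δ) ⊆ Icc (-δ) (1 + δ) := Ioo_subset_Icc_self
  have huIccJ : ∀ {x : ℝ}, x ∈ Icc (-δ) (1 + δ) → uIcc 0 x ⊆ Icc (-δ) (1 + δ) := by
    intro x hx y hy
    rcases mem_uIcc.1 hy with ⟨h1, h2⟩ | ⟨h1, h2⟩ <;>
      exact ⟨by linarith [hx.1, hx.2, hδpos], by linarith [hx.1, hx.2, hδpos]⟩
  have hΙJ : ∀ {x : ℝ}, x ∈ Icc (-δ) (1 + δ) → uIoc 0 x ⊆ Icc (-δ) (1 + δ) :=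
    fun hx => uIoc_subset_uIcc.trans (huIccJ hx)
  have haux01 : ∀ {x : ℝ}, x ∈ Ioo (0:ℝ) 1 → uIcc 0 x ⊆ Icc (0:ℝ) 1 := by
    intro x hx y hy
    rcases mem_uIcc.1 hy with ⟨h1, h2⟩ | ⟨h1, h2⟩ <;>
      exact ⟨by linarith [hx.1, hx.2], by linarith [hx.1, hx.2]⟩
  have hΙ01 : ∀ {x : ℝ}, x ∈ Ioo (0:ℝ) 1 → uIoc 0 x ⊆ Icc (0:ℝ) 1 :=
    fun hx => uIoc_subset_uIcc.trans (haux01 hx)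
  have hu3J : u3 ∈ Icc (-δ) (1 + δ) := ⟨by linarith, by linarith⟩
  have hΙu3 : uIoc 0 u3 ⊆ Icc (-δ) (1 + δ) := hΙJ hu3J
  have huIccu3 : uIcc (0:ℝ) u3 ⊆ Icc (0:ℝ) 1 := by
    rw [uIcc_of_le hu3l]; exact Icc_subset_Icc le_rfl hu3r
  have hu201 : u2 ∈ Icc (0:ℝ) 1 := ⟨hu2l.le, hu2r.le⟩
  have hu101 : u1 ∈ Icc (0:ℝ) 1 := ⟨hu1l.le, hu1r.le⟩
  -- continuity and bound for the integrand G
  have hGcont : ContinuousOn (Gfun C12 C23 C132) Ω :=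
    ((contOn_D2' hU h12).comp continuousOn_fst fun q hq => hq.1.1).mul
      (((contOn_D2' hU h23).comp
          (continuous_fst.snd.prodMk continuous_snd).continuousOn fun q hq => hq.1.2).mul
        ((contOn_D2' hU h132).comp (hΨcont.mono inter_subset_left) fun q hq => hq.2))
  have hGeq : ∀ {a b c : ℝ}, a ∈ Icc (-δ) (1 + δ) → b ∈ Icc (-δ) (1 + δ) →
      c ∈ Icc (-δ) (1 + δ) →
      copDens C12 a b * copDens C23 b c *
          copDens C132 (cond12 C12 a b) (cond32 C23 c b)
        = Gfun C12 C23 C132 ((a, b), c) := by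
    intro a b c ha hb hc
    obtain ⟨⟨h1, h2⟩, h3⟩ := hJ3 ha hb hc
    have h3' : (fderiv ℝ C12 (a, b) ((0:ℝ), (1:ℝ)), fderiv ℝ C23 (b, c) ((1:ℝ), (0:ℝ))) ∈ U := h3
    rw [hcd12 h1, hcd23 h2, hc12e h1, hc32e h2, hcd132 h3']
    simp only [Gfun, Psif]
    ring
  have hKsub : (Icc ((-δ : ℝ), (-δ : ℝ)) (1 + δ, 1 + δ)) ×ˢ (Icc (-δ) (1 + δ)) ⊆ Ω := by
    rintro ⟨⟨a, b⟩, c⟩ ⟨hab, hc⟩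
    obtain ⟨ha, hb⟩ := mem_Icc_prod.1 hab
    exact hJ3 ha hb hc
  obtain ⟨M₀, hM₀⟩ := (isCompact_Icc.prod isCompact_Icc).exists_bound_of_continuousOn
    (hGcont.mono hKsub)
  set M : ℝ := max M₀ 0 with hMdef
  have hMnn : 0 ≤ M := le_max_right _ _
  have hMb : ∀ {a b c : ℝ}, a ∈ Icc (-δ) (1 + δ) → b ∈ Icc (-δ) (1 + δ) →
      c ∈ Icc (-δ) (1 + δ) → ‖Gfun C12 C23 C132 ((a, b), c)‖ ≤ M :=
    fun ha hb hc => le_trans (hM₀ _ ⟨mem_Icc_prod.2 ⟨ha, hb⟩, hc⟩) (le_max_left _ _)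
  -- bound and continuity of h
  have hhb : ∀ {v1 v2 : ℝ}, v1 ∈ Icc (-δ) (1 + δ) → v2 ∈ Icc (-δ) (1 + δ) →
      ‖hfun C12 C23 C132 u3 v1 v2‖ ≤ M := by
    intro v1 v2 h1 h2
    have hle := intervalIntegral.norm_integral_le_of_norm_le_const
      (C := M) (f := fun v3 => Gfun C12 C23 C132 ((v1, v2), v3)) (a := 0) (b := u3)
      (fun x hx => hMb h1 h2 (hΙu3 hx))
    rw [sub_zero, abs_of_nonneg hu3l] at hle
    calc ‖hfun C12 C23 C132 u3 v1 v2‖ ≤ M * u3 := hle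
    _ ≤ M * 1 := mul_le_mul_of_nonneg_left hu3r hMnn
    _ = M := mul_one M
  have hGslice : ∀ {v1 v2 : ℝ}, v1 ∈ Icc (-δ) (1 + δ) → v2 ∈ Icc (-δ) (1 + δ) →
      ContinuousOn (fun v3 => Gfun C12 C23 C132 ((v1, v2), v3)) (Icc (-δ) (1 + δ)) :=
    fun h1 h2 => hGcont.comp (continuous_const.prodMk continuous_id).continuousOn
      fun c hc => hJ3 h1 h2 hc
  have hhcontAt : ∀ {p : ℝ × ℝ}, p.1 ∈ Ioo (-δ) (1 + δ) → p.2 ∈ Ioo (-δ) (1 + δ) →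
      ContinuousAt (fun q : ℝ × ℝ => hfun C12 C23 C132 u3 q.1 q.2) p := by
    intro p hp1 hp2
    apply intervalIntegral.continuousAt_of_dominated_interval
      (F := fun (x : ℝ × ℝ) (t : ℝ) => Gfun C12 C23 C132 ((x.1, x.2), t))
      (bound := fun _ => M) (μ := volume) (a := 0) (b := u3)
    · filter_upwards [(isOpen_Ioo.prod isOpen_Ioo).mem_nhds (⟨hp1, hp2⟩ :
        p ∈ Ioo (-δ) (1+δ) ×ˢ Ioo (-δ) (1+δ))] with x hx
      exact ((hGslice (hIoosub hx.1) (hIoosub hx.2)).mono hΙu3).aestronglyMeasurable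
        measurableSet_uIoc
    · filter_upwards [(isOpen_Ioo.prod isOpen_Ioo).mem_nhds (⟨hp1, hp2⟩ :
        p ∈ Ioo (-δ) (1+δ) ×ˢ Ioo (-δ) (1+δ))] with x hx
      exact Eventually.of_forall fun t ht => hMb (hIoosub hx.1) (hIoosub hx.2) (hΙu3 ht)
    · exact intervalIntegrable_const
    · refine Eventually.of_forall fun t ht => ?_
      exact ContinuousAt.comp (x := p) (f := fun x : ℝ × ℝ => (x, t))
        (hGcont.continuousAt (hΩopen.mem_nhds
          (hJ3 (hIoosub hp1) (hIoosub hp2) (hΙu3 ht))))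
        ((continuous_id.prodMk continuous_const).continuousAt)
  have hcont1 : ∀ {v2 : ℝ}, v2 ∈ Ioo (-δ) (1 + δ) → ∀ {v1 : ℝ}, v1 ∈ Ioo (-δ) (1 + δ) →
      ContinuousAt (fun t => hfun C12 C23 C132 u3 t v2) v1 := by
    intro v2 hv2 v1 hv1
    exact ContinuousAt.comp (x := v1) (f := fun t : ℝ => ((t : ℝ), v2))
      (g := fun q : ℝ × ℝ => hfun C12 C23 C132 u3 q.1 q.2)
      (hhcontAt (p := (v1, v2)) hv1 hv2)
      ((continuous_id.prodMk continuous_const).continuousAt)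
  have hcont2 : ∀ {v1 : ℝ}, v1 ∈ Ioo (-δ) (1 + δ) → ∀ {v2 : ℝ}, v2 ∈ Ioo (-δ) (1 + δ) →
      ContinuousAt (hfun C12 C23 C132 u3 v1) v2 := by
    intro v1 hv1 v2 hv2
    exact ContinuousAt.comp (x := v2) (f := fun y : ℝ => ((v1 : ℝ), y))
      (g := fun q : ℝ × ℝ => hfun C12 C23 C132 u3 q.1 q.2)
      (hhcontAt (p := (v1, v2)) hv1 hv2)
      ((continuous_const.prodMk continuous_id).continuousAt)
  have hcontOn2 : ∀ {v1 : ℝ}, v1 ∈ Ioo (-δ) (1 + δ) →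
      ContinuousOn (hfun C12 C23 C132 u3 v1) (Ioo (-δ) (1 + δ)) :=
    fun hv1 => continuousOn_of_forall_continuousAt fun _ hv2 => hcont2 hv1 hv2
  -- the function `vine` agrees with the triple integral of G near the unit square
  have hvineEq : ∀ {a : ℝ}, a ∈ Icc (-δ) (1 + δ) → ∀ {b : ℝ}, b ∈ Icc (-δ) (1 + δ) →
      vine C12 C23 C132 a b u3
        = ∫ v1 in (0:ℝ)..a, ∫ v2 in (0:ℝ)..b, hfun C12 C23 C132 u3 v1 v2 := by
    intro a ha b hb
    rw [vine]
    apply intervalIntegral.integral_congr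
    intro v1 hv1
    apply intervalIntegral.integral_congr
    intro v2 hv2
    apply intervalIntegral.integral_congr
    intro v3 hv3
    exact hGeq (huIccJ ha hv1) (huIccJ hb hv2) (huIccJ hu3J hv3)
  -- continuity of the partial integral in the first variable
  have hΦcont : ∀ {x : ℝ}, x ∈ Ioo (0:ℝ) 1 → ∀ {t₀ : ℝ}, t₀ ∈ Ioo (-δ) (1 + δ) →
      ContinuousAt (fun t => ∫ v2 in (0:ℝ)..x, hfun C12 C23 C132 u3 t v2) t₀ := by
    intro x hx t₀ ht₀
    apply intervalIntegral.continuousAt_of_dominated_interval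
      (F := fun (t : ℝ) (v2 : ℝ) => hfun C12 C23 C132 u3 t v2)
      (bound := fun _ => M) (μ := volume) (a := 0) (b := x)
    · filter_upwards [isOpen_Ioo.mem_nhds ht₀] with t ht
      exact ((hcontOn2 ht).mono (fun y hy => hsub2 (hΙ01 hx hy))).aestronglyMeasurable
        measurableSet_uIoc
    · filter_upwards [isOpen_Ioo.mem_nhds ht₀] with t ht
      exact Eventually.of_forall fun v2 hv2 =>
        hhb (hIoosub ht) (hIoosub (hsub2 (hΙ01 hx hv2)))
    · exact intervalIntegrable_const
    · exact Eventually.of_forall fun v2 hv2 => hcont1 (hsub2 (hΙ01 hx hv2)) ht₀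
  -- the radius ε for the parametric differentiation
  set ε : ℝ := min (min u1 (1 - u1)) (min u2 (1 - u2)) with hεdef
  have hεpos : 0 < ε :=
    lt_min (lt_min hu1l (by linarith)) (lt_min hu2l (by linarith))
  have hball2 : Metric.ball u2 ε ⊆ Ioo (0:ℝ) 1 := by
    rw [Real.ball_eq_Ioo]
    have h1 : ε ≤ u2 := (min_le_right _ _).trans (min_le_left _ _)
    have h2 : ε ≤ 1 - u2 := (min_le_right _ _).trans (min_le_right _ _)
    exact Ioo_subset_Ioo (by linarith) (by linarith)
  -- differentiation under the integral sign (inner derivative, in u2)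
  have claim1 : ∀ {a : ℝ}, a ∈ Ioo (0:ℝ) 1 →
      HasDerivAt (fun x => ∫ t in (0:ℝ)..a, ∫ v2 in (0:ℝ)..x, hfun C12 C23 C132 u3 t v2)
        (∫ t in (0:ℝ)..a, hfun C12 C23 C132 u3 t u2) u2 := by
    intro a ha
    refine (intervalIntegral.hasDerivAt_integral_of_dominated_loc_of_deriv_le (Metric.ball_mem_nhds u2 hεpos)
      (F := fun (x : ℝ) (t : ℝ) => ∫ v2 in (0:ℝ)..x, hfun C12 C23 C132 u3 t v2)
      (F' := fun (x : ℝ) (t : ℝ) => hfun C12 C23 C132 u3 t x)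
      (bound := fun _ => M) ?_ ?_ ?_ ?_ ?_ ?_).2
    · filter_upwards [isOpen_Ioo.mem_nhds (⟨hu2l, hu2r⟩ : u2 ∈ Ioo (0:ℝ) 1)] with x hx
      exact (continuousOn_of_forall_continuousAt fun t ht =>
        hΦcont hx (hsub2 (hΙ01 ha ht))).aestronglyMeasurable measurableSet_uIoc
    · apply ContinuousOn.intervalIntegrable
      exact continuousOn_of_forall_continuousAt fun t ht =>
        hΦcont ⟨hu2l, hu2r⟩ (hsub2 (haux01 ha ht))
    · exact (continuousOn_of_forall_continuousAt fun t ht =>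
        hcont1 (hsub1 ⟨hu2l, hu2r⟩) (hsub2 (hΙ01 ha ht))).aestronglyMeasurable
        measurableSet_uIoc
    · exact Eventually.of_forall fun t ht x hx =>
        hhb (hIoosub (hsub2 (hΙ01 ha ht))) (hIoosub (hsub1 (hball2 hx)))
    · exact intervalIntegrable_const
    · refine Eventually.of_forall fun t ht x hx => ?_
      apply intervalIntegral.integral_hasDerivAt_right
      · exact (continuousOn_of_forall_continuousAt fun v2 hv2 =>
          hcont2 (hsub2 (hΙ01 ha ht)) (hsub2 (haux01 (hball2 hx) hv2))).intervalIntegrable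
      · exact ContinuousOn.stronglyMeasurableAtFilter isOpen_Ioo
          (hcontOn2 (hsub2 (hΙ01 ha ht))) x (hsub1 (hball2 hx))
      · exact hcont2 (hsub2 (hΙ01 ha ht)) (hsub1 (hball2 hx))
  -- the inner derivative of vine
  have hderivEq : ∀ {a : ℝ}, a ∈ Ioo (0:ℝ) 1 →
      deriv (fun b => vine C12 C23 C132 a b u3) u2
        = ∫ t in (0:ℝ)..a, hfun C12 C23 C132 u3 t u2 := by
    intro a ha
    have hev : (fun b => vine C12 C23 C132 a b u3) =ᶠ[𝓝 u2]
        (fun b => ∫ t in (0:ℝ)..a, ∫ v2 in (0:ℝ)..b, hfun C12 C23 C132 u3 t v2) :=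
      eventually_of_mem (isOpen_Ioo.mem_nhds (hsub1 ⟨hu2l, hu2r⟩))
        fun b hb => hvineEq (hIoosub (hsub1 ha)) (hIoosub hb)
    rw [hev.deriv_eq, (claim1 ha).deriv]
  -- the outer derivative
  have hevOuter : (fun a => deriv (fun b => vine C12 C23 C132 a b u3) u2) =ᶠ[𝓝 u1]
      (fun a => ∫ t in (0:ℝ)..a, hfun C12 C23 C132 u3 t u2) :=
    eventually_of_mem (isOpen_Ioo.mem_nhds (⟨hu1l, hu1r⟩ : u1 ∈ Ioo (0:ℝ) 1))
      fun a ha => hderivEq ha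
  rw [hevOuter.deriv_eq]
  have hFTC : HasDerivAt (fun a => ∫ t in (0:ℝ)..a, hfun C12 C23 C132 u3 t u2)
      (hfun C12 C23 C132 u3 u1 u2) u1 := by
    apply intervalIntegral.integral_hasDerivAt_right
    · exact (continuousOn_of_forall_continuousAt fun t ht =>
        hcont1 (hsub1 ⟨hu2l, hu2r⟩) (hsub2 (haux01 ⟨hu1l, hu1r⟩ ht))).intervalIntegrable
    · exact ContinuousOn.stronglyMeasurableAtFilter isOpen_Ioo
        (continuousOn_of_forall_continuousAt fun t ht =>
          hcont1 (hsub1 ⟨hu2l, hu2r⟩) ht) u1 (hsub1 ⟨hu1l, hu1r⟩)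
    · exact hcont1 (hsub1 ⟨hu2l, hu2r⟩) (hsub1 ⟨hu1l, hu1r⟩)
  rw [hFTC.deriv]
  -- Step D: evaluate h(u1,u2)
  have h12U : (u1, u2) ∈ U := hUsub (mem_Icc_prod.2 ⟨hu101, hu201⟩)
  set F₀ : ℝ := fderiv ℝ C12 (u1, u2) ((0:ℝ), (1:ℝ)) with hF₀def
  have hF₀Icc : F₀ ∈ Icc (0:ℝ) 1 := by
    rw [hF₀def, ← hc12e h12U]
    exact hr12 u1 hu101 u2 hu201
  set φ : ℝ → ℝ :=
    fun c => fderiv ℝ C132 (F₀, fderiv ℝ C23 (u2, c) ((1:ℝ), (0:ℝ))) ((1:ℝ), (0:ℝ)) with hφdef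
  have hptm : ∀ {c : ℝ}, c ∈ Icc (0:ℝ) 1 →
      (F₀, fderiv ℝ C23 (u2, c) ((1:ℝ), (0:ℝ))) ∈ U := by
    intro c hc
    have h2 : (u2, c) ∈ U := hUsub (mem_Icc_prod.2 ⟨hu201, hc⟩)
    have e2 := hr32 c hc u2 hu201
    rw [hc32e h2] at e2
    exact hUsub (mem_Icc_prod.2 ⟨hF₀Icc, e2⟩)
  have hder : ∀ c ∈ uIcc (0:ℝ) u3, HasDerivAt φ
      (fderiv ℝ (fderiv ℝ C23) (u2, c) (1, 0) (0, 1) *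
        fderiv ℝ (fderiv ℝ C132) (F₀, fderiv ℝ C23 (u2, c) ((1:ℝ), (0:ℝ))) (1, 0) (0, 1)) c := by
    intro c hc
    have hc01 : c ∈ Icc (0:ℝ) 1 := huIccu3 hc
    have h23U : (u2, c) ∈ U := hUsub (mem_Icc_prod.2 ⟨hu201, hc01⟩)
    have hinner : HasDerivAt (fun y => fderiv ℝ C23 (u2, y) ((1:ℝ), (0:ℝ)))
        (fderiv ℝ (fderiv ℝ C23) (u2, c) (0, 1) (1, 0)) c :=
      hasDerivAt_slice_snd (hasFDerivAt_pd hU h23 h23U ((1:ℝ), (0:ℝ)))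
    rw [sym2 hU h23 h23U (0, 1) (1, 0)] at hinner
    have hpt := hptm hc01
    have houter := hasFDerivAt_pd hU h132 hpt ((1:ℝ), (0:ℝ))
    have hcomp := houter.comp_hasDerivAt c (HasDerivAt.prodMk (hasDerivAt_const c F₀) hinner)
    have hval : ((ContinuousLinearMap.apply ℝ ℝ ((1:ℝ), (0:ℝ))).comp
        (fderiv ℝ (fderiv ℝ C132) (F₀, fderiv ℝ C23 (u2, c) ((1:ℝ), (0:ℝ)))))
          ((0:ℝ), fderiv ℝ (fderiv ℝ C23) (u2, c) (1, 0) (0, 1))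
        = fderiv ℝ (fderiv ℝ C23) (u2, c) (1, 0) (0, 1) *
            fderiv ℝ (fderiv ℝ C132) (F₀, fderiv ℝ C23 (u2, c) ((1:ℝ), (0:ℝ))) (1, 0) (0, 1) := by
      have h0 : ((0:ℝ), fderiv ℝ (fderiv ℝ C23) (u2, c) (1, 0) (0, 1))
          = (fderiv ℝ (fderiv ℝ C23) (u2, c) (1, 0) (0, 1)) • ((0:ℝ), (1:ℝ)) := by
        simp [Prod.smul_mk]
      rw [ContinuousLinearMap.comp_apply, h0, ContinuousLinearMap.map_smul]
      simp only [ContinuousLinearMap.apply_apply, ContinuousLinearMap.smul_apply, smul_eq_mul]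
      rw [sym2 hU h132 hpt (0, 1) (1, 0)]
    rw [← hval]
    exact hcomp
  have hcontw : ContinuousOn (fun c =>
      fderiv ℝ (fderiv ℝ C23) (u2, c) (1, 0) (0, 1) *
        fderiv ℝ (fderiv ℝ C132) (F₀, fderiv ℝ C23 (u2, c) ((1:ℝ), (0:ℝ))) (1, 0) (0, 1))
      (uIcc (0:ℝ) u3) := by
    have hmap : ∀ c ∈ uIcc (0:ℝ) u3, ((u2 : ℝ), c) ∈ U := fun c hc =>
      hUsub (mem_Icc_prod.2 ⟨hu201, huIccu3 hc⟩)
    have w1 : ContinuousOn (fun c : ℝ => ((u2 : ℝ), c)) (uIcc (0:ℝ) u3) :=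
      (continuous_const.prodMk continuous_id).continuousOn
    refine ContinuousOn.mul ((contOn_D2' hU h23).comp w1 hmap) ?_
    refine (contOn_D2' hU h132).comp ?_ fun c hc => hptm (huIccu3 hc)
    exact continuousOn_const.prodMk ((contOn_pd' hU h23 ((1:ℝ), (0:ℝ))).comp w1 hmap)
  have hsub' := intervalIntegral.integral_eq_sub_of_hasDerivAt hder hcontw.intervalIntegrable
  -- φ 0 = 0
  have hz1 : fderiv ℝ C23 (u2, (0:ℝ)) ((1:ℝ), (0:ℝ)) = 0 := by
    have h0U : (u2, (0:ℝ)) ∈ U := hUsub (mem_Icc_prod.2 ⟨hu201, ⟨le_rfl, zero_le_one⟩⟩)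
    have hd : HasDerivAt (fun a => C23 (a, (0:ℝ)))
        (fderiv ℝ C23 (u2, (0:ℝ)) ((1:ℝ), (0:ℝ))) u2 :=
      hasDerivAt_slice_fst (diffAt2 hU h23 h0U).hasFDerivAt
    have hev0 : (fun a => C23 (a, (0:ℝ))) =ᶠ[𝓝 u2] (fun _ => (0:ℝ)) :=
      eventually_of_mem (isOpen_Ioo.mem_nhds (⟨hu2l, hu2r⟩ : u2 ∈ Ioo (0:ℝ) 1))
        fun a ha => (hb23 a ⟨ha.1.le, ha.2.le⟩).2
    rw [← hd.deriv, hev0.deriv_eq, deriv_const]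
  have hφ0 : φ 0 = 0 := by
    rw [hφdef]
    dsimp only
    rw [hz1]
    have hptz : (F₀, (0:ℝ)) ∈ U := hUsub (mem_Icc_prod.2 ⟨hF₀Icc, ⟨le_rfl, zero_le_one⟩⟩)
    have hd : HasDerivAt (fun a => C132 (a, (0:ℝ)))
        (fderiv ℝ C132 (F₀, (0:ℝ)) ((1:ℝ), (0:ℝ))) F₀ :=
      hasDerivAt_slice_fst (diffAt2 hU h132 hptz).hasFDerivAt
    have hd0 : HasDerivWithinAt (fun a => C132 (a, (0:ℝ)))
        (fderiv ℝ C132 (F₀, (0:ℝ)) ((1:ℝ), (0:ℝ))) (Icc (0:ℝ) 1) F₀ := hd.hasDerivWithinAt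
    have hdz : HasDerivWithinAt (fun a => C132 (a, (0:ℝ))) 0 (Icc (0:ℝ) 1) F₀ :=
      (hasDerivWithinAt_const F₀ _ (0:ℝ)).congr (fun y hy => (hb132 y hy).2)
        ((hb132 F₀ hF₀Icc).2)
    have hu := uniqueDiffOn_Icc_zero_one F₀ hF₀Icc
    rw [← hd0.derivWithin hu, hdz.derivWithin hu]
  -- pull the constant c12(u1,u2) out of the integral
  have hstep : hfun C12 C23 C132 u3 u1 u2
      = fderiv ℝ (fderiv ℝ C12) (u1, u2) (1, 0) (0, 1) * (φ u3 - φ 0) := by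
    calc hfun C12 C23 C132 u3 u1 u2
        = ∫ v3 in (0:ℝ)..u3, fderiv ℝ (fderiv ℝ C12) (u1, u2) (1, 0) (0, 1) *
            (fderiv ℝ (fderiv ℝ C23) (u2, v3) (1, 0) (0, 1) *
              fderiv ℝ (fderiv ℝ C132)
                (F₀, fderiv ℝ C23 (u2, v3) ((1:ℝ), (0:ℝ))) (1, 0) (0, 1)) := rfl
    _ = fderiv ℝ (fderiv ℝ C12) (u1, u2) (1, 0) (0, 1) *
          ∫ v3 in (0:ℝ)..u3, (fderiv ℝ (fderiv ℝ C23) (u2, v3) (1, 0) (0, 1) *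
            fderiv ℝ (fderiv ℝ C132)
              (F₀, fderiv ℝ C23 (u2, v3) ((1:ℝ), (0:ℝ))) (1, 0) (0, 1)) :=
      intervalIntegral.integral_const_mul _ _
    _ = fderiv ℝ (fderiv ℝ C12) (u1, u2) (1, 0) (0, 1) * (φ u3 - φ 0) := by rw [hsub']
  rw [hstep, hφ0, sub_zero]
  have hu3U : (u2, u3) ∈ U := hUsub (mem_Icc_prod.2 ⟨hu201, ⟨hu3l, hu3r⟩⟩)
  have hφu3 : φ u3 = pdFst C132 (cond12 C12 u1 u2) (cond32 C23 u3 u2) := by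
    rw [pdFst, hc12e h12U, hc32e hu3U]
    exact ((hasDerivAt_slice_fst
      (diffAt2 hU h132 (hptm ⟨hu3l, hu3r⟩)).hasFDerivAt).deriv).symm
  rw [hφu3, hcd12 h12U]
  exact mul_comm _ _

end
end

section
/- Let λ_{12}, λ_{13}, λ_{23} > 0 be real numbers and for integers n ≥ 2 define ρ_{ij}(n) := 1 − λ_{ij}²/log n and ρ_{13;2}(n) := (ρ_{13}(n) − ρ_{12}(n)ρ_{23}(n)) / ( √(1 − ρ_{12}(n)²) · √(1 − ρ_{23}(n)²) ). Then the partial Kendall's tau τ_{13;2}(n) := (2/π) · arcsin(ρ_{13;2}(n)) converges, as n → ∞, to (2/π) · arcsin( (λ_{12}² + λ_{23}² − λ_{13}²) / (2 λ_{12} λ_{23}) ). -/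
open Filter Real

open Filter Real

lemma key_alg (l12 l13 l23 L : ℝ) (h12 : 0 < l12) (h23 : 0 < l23)
    (hL1 : l12 ^ 2 < L) (hL2 : l23 ^ 2 < L) :
    ((1 - l13 ^ 2 / L) - (1 - l12 ^ 2 / L) * (1 - l23 ^ 2 / L)) /
      (Real.sqrt (1 - (1 - l12 ^ 2 / L) ^ 2) * Real.sqrt (1 - (1 - l23 ^ 2 / L) ^ 2))
    = (l12 ^ 2 + l23 ^ 2 - l13 ^ 2 - l12 ^ 2 * l23 ^ 2 * L⁻¹) /
        (l12 * l23 * (Real.sqrt (2 - l12 ^ 2 * L⁻¹) * Real.sqrt (2 - l23 ^ 2 * L⁻¹))) := by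
  have hL0 : 0 < L := lt_of_le_of_lt (sq_nonneg l12) hL1
  have e1 : 1 - (1 - l12 ^ 2 / L) ^ 2 = (l12 ^ 2 / L) * (2 - l12 ^ 2 * L⁻¹) := by
    field_simp; ring
  have e2 : 1 - (1 - l23 ^ 2 / L) ^ 2 = (l23 ^ 2 / L) * (2 - l23 ^ 2 * L⁻¹) := by
    field_simp; ring
  have hs1pos : 0 < Real.sqrt (2 - l12 ^ 2 * L⁻¹) := by
    apply Real.sqrt_pos.2
    have : l12 ^ 2 * L⁻¹ < 1 := by
      rw [mul_inv_lt_iff₀ hL0]; linarith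
    linarith
  have hs2pos : 0 < Real.sqrt (2 - l23 ^ 2 * L⁻¹) := by
    apply Real.sqrt_pos.2
    have : l23 ^ 2 * L⁻¹ < 1 := by
      rw [mul_inv_lt_iff₀ hL0]; linarith
    linarith
  rw [e1, e2, Real.sqrt_mul (by positivity), Real.sqrt_mul (by positivity),
    Real.sqrt_div (sq_nonneg l12) L, Real.sqrt_div (sq_nonneg l23) L,
    Real.sqrt_sq h12.le, Real.sqrt_sq h23.le]
  have hsL : Real.sqrt L ^ 2 = L := Real.sq_sqrt hL0.le
  have hsLpos : 0 < Real.sqrt L := Real.sqrt_pos.2 hL0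
  set sL := Real.sqrt L
  set s1 := Real.sqrt (2 - l12 ^ 2 * L⁻¹)
  set s2 := Real.sqrt (2 - l23 ^ 2 * L⁻¹)
  rw [← hsL]
  field_simp
  ring


/-- with `ρ_ij(n) = 1 - λ_ij² / log n` and partial correlation
`ρ_{13;2}(n) = (ρ13(n) - ρ12(n) ρ23(n)) / (√(1 - ρ12(n)²) √(1 - ρ23(n)²))`, the partial
Kendall's tau `τ_{13;2}(n) = (2/π) arcsin(ρ_{13;2}(n))` converges, as `n → ∞`, to
`(2/π) arcsin((λ12² + λ23² - λ13²) / (2 λ12 λ23))`. -/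
theorem partial_kendalls_tau_limit (l12 l13 l23 : ℝ)
    (h12 : 0 < l12) (h13 : 0 < l13) (h23 : 0 < l23) :
    Filter.Tendsto
      (fun n : ℕ =>
        (2 / Real.pi) * Real.arcsin
          (((1 - l13 ^ 2 / Real.log n) -
              (1 - l12 ^ 2 / Real.log n) * (1 - l23 ^ 2 / Real.log n)) /
            (Real.sqrt (1 - (1 - l12 ^ 2 / Real.log n) ^ 2) *
              Real.sqrt (1 - (1 - l23 ^ 2 / Real.log n) ^ 2))))
      Filter.atTop
      (nhds ((2 / Real.pi) *
        Real.arcsin ((l12 ^ 2 + l23 ^ 2 - l13 ^ 2) / (2 * l12 * l23)))) := by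
  have hlog : Tendsto (fun n : ℕ => Real.log n) atTop atTop :=
    Real.tendsto_log_atTop.comp tendsto_natCast_atTop_atTop
  have hinv : Tendsto (fun n : ℕ => (Real.log n)⁻¹) atTop (nhds 0) :=
    hlog.inv_tendsto_atTop
  have hs1 : Tendsto (fun n : ℕ => Real.sqrt (2 - l12 ^ 2 * (Real.log n)⁻¹)) atTop
      (nhds (Real.sqrt 2)) := by
    have h : Tendsto (fun n : ℕ => 2 - l12 ^ 2 * (Real.log n)⁻¹) atTop (nhds 2) := by
      simpa using tendsto_const_nhds.sub (hinv.const_mul (l12 ^ 2))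
    exact (Real.continuous_sqrt.tendsto 2).comp h
  have hs2 : Tendsto (fun n : ℕ => Real.sqrt (2 - l23 ^ 2 * (Real.log n)⁻¹)) atTop
      (nhds (Real.sqrt 2)) := by
    have h : Tendsto (fun n : ℕ => 2 - l23 ^ 2 * (Real.log n)⁻¹) atTop (nhds 2) := by
      simpa using tendsto_const_nhds.sub (hinv.const_mul (l23 ^ 2))
    exact (Real.continuous_sqrt.tendsto 2).comp h
  have hnum : Tendsto (fun n : ℕ =>
      l12 ^ 2 + l23 ^ 2 - l13 ^ 2 - l12 ^ 2 * l23 ^ 2 * (Real.log n)⁻¹) atTop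
      (nhds (l12 ^ 2 + l23 ^ 2 - l13 ^ 2)) := by
    simpa using tendsto_const_nhds.sub (hinv.const_mul (l12 ^ 2 * l23 ^ 2))
  have hden : Tendsto (fun n : ℕ =>
      l12 * l23 * (Real.sqrt (2 - l12 ^ 2 * (Real.log n)⁻¹) *
        Real.sqrt (2 - l23 ^ 2 * (Real.log n)⁻¹))) atTop
      (nhds (l12 * l23 * (Real.sqrt 2 * Real.sqrt 2))) :=
    tendsto_const_nhds.mul (hs1.mul hs2)
  have hdenne : l12 * l23 * (Real.sqrt 2 * Real.sqrt 2) ≠ 0 := by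
    rw [Real.mul_self_sqrt (by norm_num : (2:ℝ) ≥ 0).le]
    positivity
  have hquot := hnum.div hden hdenne
  have hlim : (l12 ^ 2 + l23 ^ 2 - l13 ^ 2) / (l12 * l23 * (Real.sqrt 2 * Real.sqrt 2)) =
      (l12 ^ 2 + l23 ^ 2 - l13 ^ 2) / (2 * l12 * l23) := by
    rw [Real.mul_self_sqrt (by norm_num : (0:ℝ) ≤ 2)]; ring_nf
  have harcsin : Tendsto (fun n : ℕ =>
      (2 / Real.pi) * Real.arcsin ((l12 ^ 2 + l23 ^ 2 - l13 ^ 2 -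
        l12 ^ 2 * l23 ^ 2 * (Real.log n)⁻¹) /
        (l12 * l23 * (Real.sqrt (2 - l12 ^ 2 * (Real.log n)⁻¹) *
          Real.sqrt (2 - l23 ^ 2 * (Real.log n)⁻¹))))) atTop
      (nhds ((2 / Real.pi) *
        Real.arcsin ((l12 ^ 2 + l23 ^ 2 - l13 ^ 2) / (2 * l12 * l23)))) := by
    rw [← hlim]
    exact (Real.continuous_arcsin.tendsto _).comp hquot |>.const_mul _
  refine Filter.Tendsto.congr' ?_ harcsin
  filter_upwards [hlog.eventually_gt_atTop (l12 ^ 2), hlog.eventually_gt_atTop (l23 ^ 2)]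
    with n h1 h2
  exact congrArg (fun x => 2 / Real.pi * Real.arcsin x)
    (key_alg l12 l13 l23 _ h12 h23 h1 h2).symm
end
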